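/- Let G be a countably infinite group acting by measurable bijections on a measurable space X, let μ be a G-quasi-invariant probability measure on X, and let W ⊆ X be a measurable wandering set (μ(W ∩ g•W) = 0 for every g ≠ 1). For each g ∈ G let D_g denote the Radon–Nikodym derivative of the pushforward g_*μ with respect to μ. Then for μ-almost every x ∈ W and every ε > 0, the set {g ∈ G : D_g(x) ≥ ε} is finite; in particular D_{g_n}(x) → 0 as n → ∞ for every sequence (g_n) of pairwise distinct elements of G. -/

import Mathlib

open MeasureTheory Pointwise ENNReal

/-- Let a countably infinite group `G` act by measurable bijections on a measurable space
`X`, let `μ` be a `G`-quasi-invariant probability measure, and let `W` be a wandering set.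
Then at `μ`-almost every point `x` of `W`, for every `ε > 0` only finitely many
Radon–Nikodym derivatives `D_g = d(g_*μ)/dμ` satisfy `D_g(x) ≥ ε`; in particular
`D_{g_n}(x) → 0` along every sequence of pairwise distinct elements of `G`. -/
theorem stmt13 {G X : Type*} [Group G] [Countable G] [Infinite G] [MeasurableSpace X]
    [MulAction G X]
    (hmeas : ∀ g : G, Measurable (fun x : X => g • x))
    (μ : Measure X) [IsProbabilityMeasure μ]
    (hqi : ∀ g : G, μ.map (fun x : X => g • x) ≪ μ)
    (W : Set X) (hW : MeasurableSet W)
    (hwand : ∀ g : G, g ≠ 1 → μ (W ∩ g • W) = 0) :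
    ∀ᵐ x ∂μ, x ∈ W →
      (∀ ε : ℝ≥0∞, 0 < ε →
        {g : G | ε ≤ (μ.map (fun y : X => g • y)).rnDeriv μ x}.Finite) ∧
      (∀ gseq : ℕ → G, Function.Injective gseq →
        Filter.Tendsto (fun n : ℕ => (μ.map (fun y : X => gseq n • y)).rnDeriv μ x)
          Filter.atTop (nhds 0)) := by
  set D : G → X → ℝ≥0∞ := fun g x => (μ.map (fun y : X => g • y)).rnDeriv μ x with hDdef
  have hDm : ∀ g, Measurable (D g) := fun g => Measure.measurable_rnDeriv _ _
  set A : G → Set X := fun g => (fun x : X => g • x) ⁻¹' W with hAdef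
  have hAm : ∀ g, MeasurableSet (A g) := fun g => (hmeas g) hW
  -- pairwise a.e. disjointness of the sets A g
  have hdisj : Pairwise (Function.onFun (AEDisjoint μ) A) := by
    intro g h hgh
    have hne : g * h⁻¹ ≠ 1 := fun hcon => hgh (mul_inv_eq_one.mp hcon)
    have key : A g ∩ A h = (fun x : X => g • x) ⁻¹' (W ∩ (g * h⁻¹) • W) := by
      ext x
      simp only [hAdef, Set.mem_inter_iff, Set.mem_preimage,
        Set.mem_smul_set_iff_inv_smul_mem, smul_smul]
      have e : (g * h⁻¹)⁻¹ * g = h := by group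
      rw [e]
    have hWm2 : MeasurableSet (W ∩ (g * h⁻¹) • W) := by
      have : (g * h⁻¹) • W = (fun x : X => (g * h⁻¹)⁻¹ • x) ⁻¹' W := by
        rw [Set.preimage_smul, inv_inv]
      exact hW.inter (this ▸ (hmeas _) hW)
    have : μ (A g ∩ A h) = μ.map (fun x : X => g • x) (W ∩ (g * h⁻¹) • W) := by
      rw [key, Measure.map_apply (hmeas g) hWm2]
    exact this.trans ((hqi g) (hwand _ hne))
  -- the total sum of measures is finite
  have hsum_meas : ∑' g : G, μ (A g) ≤ 1 := by
    rw [← measure_iUnion₀ hdisj fun g => (hAm g).nullMeasurableSet]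
    exact prob_le_one
  -- each set integral of the RN derivative is bounded by the pushforward measure of W
  have hint_le : ∀ g : G, ∫⁻ x in W, D g x ∂μ ≤ μ (A g) := by
    intro g
    have := Measure.setLIntegral_rnDeriv_le (μ := μ.map (fun y : X => g • y)) (ν := μ) W
    rwa [Measure.map_apply (hmeas g) hW] at this
  have hint : ∫⁻ x in W, (∑' g : G, D g x) ∂μ ≠ ∞ := by
    rw [lintegral_tsum fun g => (hDm g).aemeasurable]
    exact ((le_trans (ENNReal.tsum_le_tsum hint_le) hsum_meas).trans_lt one_lt_top).ne
  have hae : ∀ᵐ x ∂μ.restrict W, (∑' g : G, D g x) < ∞ :=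
    ae_lt_top (Measurable.ennreal_tsum hDm) hint
  rw [ae_restrict_iff' hW] at hae
  filter_upwards [hae] with x hx hxW
  have hfin : (∑' g : G, D g x) ≠ ∞ := (hx hxW).ne
  constructor
  · intro ε hε
    exact ENNReal.finite_const_le_of_tsum_ne_top hfin hε.ne'
  · intro gseq hinj
    have h1 : Filter.Tendsto (fun g : G => D g x) Filter.cofinite (nhds 0) :=
      ENNReal.tendsto_cofinite_zero_of_tsum_ne_top hfin
    have h2 : Filter.Tendsto gseq Filter.atTop Filter.cofinite := by
      rw [← Nat.cofinite_eq_atTop]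
      exact hinj.tendsto_cofinite
    exact h1.comp h2
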